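/- No nonempty prefix of the Thue–Morse word t is a square. -/

import Mathlib

/-- A square is a word of the form XX with X nonempty. -/
def IsSquare' {α : Type*} (w : List α) : Prop :=
  ∃ X : List α, X ≠ [] ∧ w = X ++ X

open Fin.NatCast

/-- The Thue–Morse word: the n-th letter (0-indexed) is the parity of the number
of 1s in the binary expansion of n. -/
def thueMorse (n : ℕ) : Fin 2 := ((Nat.digits 2 n).sum : Fin 2)

/-- The finite prefix of length n of an infinite word. -/
def wordPrefix {α : Type*} (s : ℕ → α) (n : ℕ) : List α := (List.range n).map s

lemma tm_even (n : ℕ) : thueMorse (2*n) = thueMorse n := by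
  rcases Nat.eq_zero_or_pos n with h | h
  · subst h; rfl
  · unfold thueMorse
    rw [Nat.digits_def' (by norm_num : 1 < 2) (by omega : 0 < 2*n)]
    have h1 : (2*n) % 2 = 0 := by omega
    have h2 : (2*n) / 2 = n := by omega
    rw [h1, h2]
    push_cast [List.sum_cons]
    exact zero_add _

lemma tm_odd (n : ℕ) : thueMorse (2*n+1) = 1 + thueMorse n := by
  unfold thueMorse
  rw [Nat.digits_def' (by norm_num : 1 < 2) (by omega : 0 < 2*n+1)]
  have h1 : (2*n+1) % 2 = 1 := by omega
  have h2 : (2*n+1) / 2 = n := by omega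
  rw [h1, h2]
  push_cast [List.sum_cons]
  ring

lemma tm0 : thueMorse 0 = 0 := by simp [thueMorse]

lemma tm1 : thueMorse 1 = 1 := by
  have := tm_odd 0
  norm_num [tm0] at this
  simpa using this

lemma main_lemma : ∀ m, m ≠ 0 → ¬ (∀ i < m, thueMorse i = thueMorse (m+i)) := by
  intro m
  induction m using Nat.strong_induction_on with
  | _ m ih =>
    intro hm h
    rcases Nat.even_or_odd m with ⟨k, hk⟩ | ⟨k, hk⟩
    · subst hk
      have hk0 : k ≠ 0 := by omega
      apply ih k (by omega) hk0
      intro i hi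
      have h2 := h (2*i) (by omega)
      rw [show k + k + 2*i = 2*(k+i) by omega, tm_even, tm_even] at h2
      exact h2
    · subst hk
      have h1 : ∀ j ≤ k, thueMorse j = 1 + thueMorse (k+j) := by
        intro j hj
        have := h (2*j) (by omega)
        rw [show 2*k+1 + 2*j = 2*(k+j)+1 by omega, tm_even, tm_odd] at this
        exact this
      rcases Nat.eq_zero_or_pos k with hk0 | hk0
      · subst hk0
        have he : (0:Fin 2) = 1 + thueMorse (0+0) := by
          rw [← tm0]; exact h1 0 le_rfl
        rw [show (0:ℕ)+0 = 0 from rfl, tm0] at he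
        exact absurd he (by decide)
      · have h2 : ∀ j < k, 1 + thueMorse j = thueMorse (k+j+1) := by
          intro j hj
          have := h (2*j+1) (by omega)
          rw [show 2*k+1 + (2*j+1) = 2*(k+j+1) by omega, tm_odd, tm_even] at this
          exact this
        have step : ∀ j < k, thueMorse (j+1) = thueMorse j := by
          intro j hj
          have a := h1 (j+1) (by omega)
          have b := h2 j hj
          rw [show k + (j+1) = k+j+1 by omega, ← b] at a
          revert a
          generalize thueMorse (j+1) = x
          generalize thueMorse j = y
          revert x y; decide
        have const : ∀ j ≤ k, thueMorse j = thueMorse 0 := by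
          intro j
          induction j with
          | zero => intro _; rfl
          | succ j ihj =>
            intro hj
            rw [step j (by omega), ihj (by omega)]
        have := const 1 hk0
        rw [tm0, tm1] at this
        exact absurd this (by decide)

theorem no_thueMorse_prefix_is_square (n : ℕ) (hn : n ≠ 0) :
    ¬ IsSquare' (wordPrefix thueMorse n) := by
  rintro ⟨X, hX, hw⟩
  set m := X.length with hmdef
  have hm : m ≠ 0 := by simpa [hmdef] using hX
  have hlen : n = m + m := by
    have := congrArg List.length hw
    simpa [wordPrefix] using this
  have hsplit : wordPrefix thueMorse n
      = (List.range m).map thueMorse ++ (List.range m).map (fun i => thueMorse (m+i)) := by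
    rw [hlen]
    unfold wordPrefix
    rw [List.range_add, List.map_append, List.map_map]
    rfl
  rw [hsplit] at hw
  have hlen2 : X.length = ((List.range m).map thueMorse).length := by simp [hmdef]
  obtain ⟨e1, e2⟩ := List.append_inj hw.symm hlen2
  have heq : (List.range m).map thueMorse = (List.range m).map (fun i => thueMorse (m+i)) := by
    exact e1.symm.trans e2
  apply main_lemma m hm
  intro i hi
  have := congrArg (fun l => l[i]?) heq
  simpa [List.getElem?_map, List.getElem?_range, hi] using this
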